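/- For n ≥ 3 and any prime power q, A_q(n,n-1,n-2;q) = q^{n-1}: the maximum size of a collection of (n-1)-dimensional subspaces of F_q^n in which every (n-2)-dimensional subspace is covered at most q times equals q^{n-1}. -/

import Mathlib

open scoped Classical

def gaussBinom (q : ℕ) : ℕ → ℕ → ℕ
  | _, 0 => 1
  | 0, _ + 1 => 0
  | n + 1, k + 1 => gaussBinom q n k + q ^ (k + 1) * gaussBinom q n (k + 1)

def IsPacking (F : Type) [Field F] [Fintype F] (n k t lam : ℕ)
    (S : Finset (Submodule F (Fin n → F))) : Prop :=
  (∀ U ∈ S, Module.finrank F U = k) ∧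
    ∀ T : Submodule F (Fin n → F), Module.finrank F T = t →
      (S.filter fun U => T ≤ U).card ≤ lam

noncomputable def packingNumber (F : Type) [Field F] [Fintype F] (n k t lam : ℕ) : ℕ :=
  sSup {m | ∃ S : Finset (Submodule F (Fin n → F)), IsPacking F n k t lam S ∧ S.card = m}

def IsRPacking (F : Type) [Field F] [Fintype F] (n k t lam : ℕ)
    (S : Multiset (Submodule F (Fin n → F))) : Prop :=
  (∀ U ∈ S, Module.finrank F U = k) ∧
    ∀ T : Submodule F (Fin n → F), Module.finrank F T = t →
      (S.countP fun U => T ≤ U) ≤ lam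

noncomputable def rPackingNumber (F : Type) [Field F] [Fintype F] (n k t lam : ℕ) : ℕ :=
  sSup {m | ∃ S : Multiset (Submodule F (Fin n → F)), IsRPacking F n k t lam S ∧ Multiset.card S = m}


namespace PackingAux

open Module Submodule LinearMap Finset

variable {F : Type} [Field F] [Fintype F]
variable {V : Type} [AddCommGroup V] [Module F V] [FiniteDimensional F V] [Fintype V]

noncomputable instance : Fintype (V →ₗ[F] F) :=
  have : Finite (V →ₗ[F] F) :=
    Finite.of_injective (fun f => (f : V → F)) DFunLike.coe_injective
  Fintype.ofFinite _

noncomputable instance : Fintype (Submodule F V) :=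
  have : Finite (Submodule F V) :=
    Finite.of_injective (fun U => (U : Set V)) SetLike.coe_injective
  Fintype.ofFinite _

set_option linter.unusedSectionVars false

theorem ker_hyperplane (f : V →ₗ[F] F) (hf : f ≠ 0) :
    finrank F (ker f) + 1 = finrank F V := by
  have h1 := LinearMap.finrank_range_add_finrank_ker f
  have h2 : finrank F (range f) = 1 := by
    have hle : finrank F (range f) ≤ 1 := by
      simpa using Submodule.finrank_le (range f)
    have hne : range f ≠ ⊥ := by
      intro h; exact hf (LinearMap.range_eq_bot.mp h)
    have hpos : finrank F (range f) ≠ 0 := by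
      intro h0
      exact hne ((Submodule.finrank_eq_zero (R := F)).mp h0)
    omega
  omega

theorem exists_functional (U : Submodule F V) (h : finrank F U + 1 = finrank F V) :
    ∃ f : V →ₗ[F] F, f ≠ 0 ∧ ker f = U := by
  have hq : finrank F (V ⧸ U) = finrank F F := by
    have := Submodule.finrank_quotient_add_finrank U
    simp only [Module.finrank_self]
    omega
  obtain ⟨e⟩ := FiniteDimensional.nonempty_linearEquiv_of_finrank_eq hq
  refine ⟨e.toLinearMap ∘ₗ U.mkQ, ?_, ?_⟩
  · intro hf0
    have hker : ker (e.toLinearMap ∘ₗ U.mkQ) = ⊤ := by rw [hf0]; exact ker_zero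
    rw [LinearMap.ker_comp, LinearEquiv.ker, Submodule.comap_bot, Submodule.ker_mkQ] at hker
    have : finrank F U = finrank F V := by rw [hker]; exact finrank_top F V
    omega
  · rw [LinearMap.ker_comp, LinearEquiv.ker, Submodule.comap_bot, Submodule.ker_mkQ]

theorem proportional (f g : V →ₗ[F] F) (hg : g ≠ 0) (hk : ker f = ker g) :
    ∃ c : F, c ≠ 0 ∧ g = c • f := by
  obtain ⟨x, hx⟩ : ∃ x, g x ≠ 0 := by
    by_contra h
    push_neg at h
    exact hg (LinearMap.ext fun v => by simpa using h v)
  have hfx : f x ≠ 0 := by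
    intro h0
    have hxk : x ∈ ker f := h0
    rw [hk] at hxk
    exact hx hxk
  refine ⟨g x * (f x)⁻¹, mul_ne_zero hx (inv_ne_zero hfx), ?_⟩
  ext v
  have hmem : v - (f v * (f x)⁻¹) • x ∈ ker f := by
    simp only [LinearMap.mem_ker, map_sub, map_smul, smul_eq_mul]
    field_simp
    ring
  rw [hk] at hmem
  simp only [LinearMap.mem_ker, map_sub, map_smul, smul_eq_mul, sub_eq_zero] at hmem
  simp only [LinearMap.smul_apply, smul_eq_mul]
  rw [hmem]; ring

/-- Key counting lemma: number of hyperplanes containing a fixed subspace `T`. -/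
theorem card_hyp_through (T : Submodule F V) :
    (Fintype.card F - 1) *
      (Finset.univ.filter fun U : Submodule F V =>
        finrank F U + 1 = finrank F V ∧ T ≤ U).card + 1
    = Fintype.card F ^ (finrank F V - finrank F T) := by
  set q := Fintype.card F with hqdef
  have hq2 : 2 ≤ q := Fintype.one_lt_card
  set B := Finset.univ.filter fun U : Submodule F V =>
      finrank F U + 1 = finrank F V ∧ T ≤ U with hB
  set A' := Finset.univ.filter fun f : V →ₗ[F] F => T ≤ ker f with hA'
  set A := A'.erase 0 with hA
  have hA'card : A'.card = q ^ (finrank F V - finrank F T) := by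
    have h1 : A'.card = Fintype.card {f : V →ₗ[F] F // T ≤ ker f} :=
      (Fintype.card_subtype _).symm
    have e2 : {f : V →ₗ[F] F // T ≤ ker f} ≃ T.dualAnnihilator := by
      refine Equiv.subtypeEquiv (Equiv.refl _) fun f => ?_
      simp only [Equiv.refl_apply, Submodule.mem_dualAnnihilator]
      constructor
      · intro h w hw; exact h hw
      · intro h w hw; exact h w hw
    have h3 : Fintype.card T.dualAnnihilator = q ^ finrank F T.dualAnnihilator :=
      by convert Module.card_eq_pow_finrank (K := F) (V := T.dualAnnihilator)
    have h4 : finrank F T.dualAnnihilator + finrank F T = finrank F V := by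
      have hqe : finrank F (V ⧸ T) = finrank F T.dualAnnihilator :=
        LinearEquiv.finrank_eq (Subspace.quotEquivAnnihilator T)
      have := Submodule.finrank_quotient_add_finrank T
      omega
    have h5 : finrank F T.dualAnnihilator = finrank F V - finrank F T := by omega
    rw [h1, Fintype.card_congr e2, h3, h5]
  have h0A' : (0 : V →ₗ[F] F) ∈ A' := by
    rw [hA', Finset.mem_filter]
    refine ⟨Finset.mem_univ _, ?_⟩
    rw [LinearMap.ker_zero]
    exact le_top
  have hAcard : A.card + 1 = q ^ (finrank F V - finrank F T) := by
    rw [hA, Finset.card_erase_of_mem h0A', ← hA'card]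
    have : 1 ≤ A'.card := Finset.card_pos.mpr ⟨0, h0A'⟩
    omega
  have hmaps : ∀ f ∈ A, ker f ∈ B := by
    intro f hf
    rw [hA, Finset.mem_erase] at hf
    obtain ⟨hf0, hf'⟩ := hf
    rw [hA', Finset.mem_filter] at hf'
    rw [hB, Finset.mem_filter]
    exact ⟨Finset.mem_univ _, ker_hyperplane f hf0, hf'.2⟩
  have hsum : A.card = ∑ U ∈ B, (A.filter fun f => ker f = U).card :=
    Finset.card_eq_sum_card_fiberwise hmaps
  have hfiber : ∀ U ∈ B, (A.filter fun f => ker f = U).card = q - 1 := by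
    intro U hU
    rw [hB, Finset.mem_filter] at hU
    obtain ⟨-, hUrk, hTU⟩ := hU
    obtain ⟨f₀, hf₀0, hf₀k⟩ := exists_functional U hUrk
    obtain ⟨x, hx⟩ : ∃ x, f₀ x ≠ 0 := by
      by_contra h
      push_neg at h
      exact hf₀0 (LinearMap.ext fun v => by simpa using h v)
    have hcard : (Finset.univ.erase (0 : F)).card = q - 1 := by
      rw [Finset.card_erase_of_mem (Finset.mem_univ _), Finset.card_univ]
    rw [← hcard]
    refine (Finset.card_bij (fun c _ => c • f₀) ?_ ?_ ?_).symm
    · intro c hc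
      have hc0 : c ≠ 0 := (Finset.mem_erase.mp hc).1
      have hker : ker (c • f₀) = ker f₀ := LinearMap.ker_smul f₀ c hc0
      rw [Finset.mem_filter, hA, Finset.mem_erase, hA', Finset.mem_filter]
      refine ⟨⟨?_, Finset.mem_univ _, ?_⟩, ?_⟩
      · intro h0
        have : c * f₀ x = 0 := by
          have := congrArg (fun f : V →ₗ[F] F => f x) h0
          simpa using this
        exact hx (by
          rcases mul_eq_zero.mp this with h | h
          · exact absurd h hc0
          · exact h)
      · rw [hker, hf₀k]; exact hTU
      · rw [hker, hf₀k]
    · intro c hc c' hc' h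
      have := congrArg (fun f : V →ₗ[F] F => f x) h
      simp only [LinearMap.smul_apply, smul_eq_mul] at this
      exact mul_right_cancel₀ hx this
    · intro f hf
      rw [Finset.mem_filter, hA, Finset.mem_erase] at hf
      obtain ⟨⟨hf0, -⟩, hfU⟩ := hf
      obtain ⟨c, hc0, hceq⟩ := proportional f₀ f hf0 (by rw [hf₀k, hfU])
      exact ⟨c, Finset.mem_erase.mpr ⟨hc0, Finset.mem_univ _⟩, hceq.symm⟩
  have : A.card = B.card * (q - 1) := by
    rw [hsum, Finset.sum_congr rfl hfiber, Finset.sum_const, smul_eq_mul]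
  rw [mul_comm, ← this, hAcard]

/-- Counting codimension-1 subspaces of a subspace `H`. -/
theorem card_sub_hyperplanes (H : Submodule F V) :
    (Fintype.card F - 1) *
      (Finset.univ.filter fun T : Submodule F V =>
        finrank F T + 1 = finrank F H ∧ T ≤ H).card + 1
    = Fintype.card F ^ finrank F H := by
  have key := card_hyp_through (V := H) (⊥ : Submodule F H)
  rw [finrank_bot, Nat.sub_zero] at key
  rw [← key]
  congr 2
  refine (Finset.card_bij (fun (W : Submodule F H) _ => W.map H.subtype) ?_ ?_ ?_).symm
  · intro W hW
    rw [Finset.mem_filter] at hW ⊢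
    refine ⟨Finset.mem_univ _, ?_, ?_⟩
    · rw [Submodule.finrank_map_subtype_eq]
      exact hW.2.1
    · exact Submodule.map_subtype_le H W
  · intro W hW W' hW' h
    exact Submodule.map_injective_of_injective H.injective_subtype h
  · intro T hT
    rw [Finset.mem_filter] at hT
    obtain ⟨-, hTrk, hTH⟩ := hT
    refine ⟨T.comap H.subtype, ?_, ?_⟩
    · rw [Finset.mem_filter]
      have hmc : (T.comap H.subtype).map H.subtype = T := by
        rw [Submodule.map_comap_subtype, inf_eq_right.mpr hTH]
      refine ⟨Finset.mem_univ _, ?_, bot_le⟩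
      rw [← Submodule.finrank_map_subtype_eq H (T.comap H.subtype), hmc]
      exact hTrk
    · show Submodule.map H.subtype (T.comap H.subtype) = T
      rw [Submodule.map_comap_subtype, inf_eq_right.mpr hTH]

end PackingAux

namespace MainAux


open Module Submodule LinearMap Finset PackingAux

set_option linter.unusedSectionVars false
set_option maxHeartbeats 1000000

theorem upper_bound (q n : ℕ) (F : Type) [Field F] [Fintype F] (hq : Fintype.card F = q)
    (hn : 3 ≤ n) (S : Finset (Submodule F (Fin n → F)))
    (h1 : ∀ U ∈ S, finrank F U = n - 1)
    (h2 : ∀ T : Submodule F (Fin n → F), finrank F T = n - 2 →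
      (S.filter fun U => T ≤ U).card ≤ q) :
    S.card ≤ q ^ (n - 1) := by
  have hq2 : 2 ≤ q := hq ▸ Fintype.one_lt_card
  have hrV : finrank F (Fin n → F) = n := Module.finrank_fin_fun F
  rcases S.eq_empty_or_nonempty with rfl | ⟨H, hH⟩
  · simp
  set AllH := Finset.univ.filter fun U : Submodule F (Fin n → F) =>
      finrank F U + 1 = n ∧ (⊥ : Submodule F (Fin n → F)) ≤ U with hAllH
  have keyAll : (q - 1) * AllH.card + 1 = q ^ n := by
    have key := card_hyp_through (⊥ : Submodule F (Fin n → F))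
    rw [hrV, hq, finrank_bot, Nat.sub_zero] at key
    exact key
  have hrH : finrank F H = n - 1 := h1 H hH
  set TS := Finset.univ.filter fun T : Submodule F (Fin n → F) =>
      finrank F T + 1 = n - 1 ∧ T ≤ H with hTS
  have keyTS : (q - 1) * TS.card + 1 = q ^ (n - 1) := by
    have key := card_sub_hyperplanes H
    rw [hq, hrH] at key
    exact key
  have hSsub : S ⊆ AllH := by
    intro U hU
    rw [hAllH, Finset.mem_filter]
    have := h1 U hU
    exact ⟨Finset.mem_univ _, by omega, bot_le⟩
  set C := AllH \ S with hC
  -- choice of a hyperplane avoiding S through each T in TS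
  have hex : ∀ T : Submodule F (Fin n → F), ∃ K, T ∈ TS → (K ∈ C ∧ T ≤ K) := by
    intro T
    by_cases hT : T ∈ TS
    · rw [hTS, Finset.mem_filter] at hT
      obtain ⟨-, hTrk, hTH⟩ := hT
      have hTrk' : finrank F T = n - 2 := by omega
      set B₁ := Finset.univ.filter fun U : Submodule F (Fin n → F) =>
          finrank F U + 1 = n ∧ T ≤ U with hB₁
      have key₁ : (q - 1) * B₁.card + 1 = q ^ 2 := by
        have key := card_hyp_through T
        rw [hrV, hq, hTrk'] at key
        rw [show n - (n - 2) = 2 by omega] at key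
        exact key
      have hB₁card : B₁.card = q + 1 := by
        have huniq : (q - 1) * (q + 1) + 1 = q ^ 2 := by
          obtain ⟨p, rfl⟩ : ∃ p, q = p + 2 := ⟨q - 2, by omega⟩
          have hp1 : p + 2 - 1 = p + 1 := rfl
          rw [hp1]; ring
        exact Nat.eq_of_mul_eq_mul_left (show 0 < q - 1 by omega)
          (Nat.add_right_cancel (key₁.trans huniq.symm))
      have hfil : (S.filter fun U => T ≤ U) ⊆ B₁ := by
        intro U hU
        rw [Finset.mem_filter] at hU
        rw [hB₁, Finset.mem_filter]
        have := h1 U hU.1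
        exact ⟨Finset.mem_univ _, by omega, hU.2⟩
      have hle : (S.filter fun U => T ≤ U).card ≤ q := h2 T hTrk'
      have : ∃ K ∈ B₁, K ∉ S := by
        by_contra hcon
        push_neg at hcon
        have : B₁ ⊆ S.filter fun U => T ≤ U := by
          intro K hK
          have hKS := hcon K hK
          rw [hB₁, Finset.mem_filter] at hK
          rw [Finset.mem_filter]
          exact ⟨hKS, hK.2.2⟩
        have := Finset.card_le_card this
        omega
      obtain ⟨K, hKB, hKS⟩ := this
      refine ⟨K, fun _ => ⟨?_, ?_⟩⟩
      · rw [hC, Finset.mem_sdiff]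
        rw [hB₁, Finset.mem_filter] at hKB
        refine ⟨?_, hKS⟩
        rw [hAllH, Finset.mem_filter]
        exact ⟨Finset.mem_univ _, hKB.2.1, bot_le⟩
      · rw [hB₁, Finset.mem_filter] at hKB
        exact hKB.2.2
    · exact ⟨⊥, fun h => absurd h hT⟩
  choose g hg using hex
  have hinj : TS.card ≤ C.card := by
    apply Finset.card_le_card_of_injOn g (fun T hT => (hg T hT).1)
    intro T hT T' hT' heq
    rw [Finset.mem_coe] at hT hT'
    by_contra hne
    have hT0 := hT; have hT0' := hT'
    rw [hTS, Finset.mem_filter] at hT0 hT0'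
    obtain ⟨-, hTrk, hTH⟩ := hT0
    obtain ⟨-, hTrk', hTH'⟩ := hT0'
    have hne' : ¬ T' ≤ T := fun hle => hne
      (Submodule.eq_of_le_of_finrank_eq hle (by omega)).symm
    have hlt : T < T ⊔ T' := lt_of_le_of_ne le_sup_left
      (fun h => hne' (by rw [h]; exact le_sup_right))
    have hrk2 : finrank F T < finrank F ↥(T ⊔ T') :=
      Submodule.finrank_lt_finrank_of_lt hlt
    have hsupH : T ⊔ T' = H :=
      Submodule.eq_of_le_of_finrank_le (sup_le hTH hTH') (by omega)
    have hgC := (hg T hT).1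
    rw [hC, Finset.mem_sdiff] at hgC
    obtain ⟨hgAll, hgS⟩ := hgC
    rw [hAllH, Finset.mem_filter] at hgAll
    have hHK : H ≤ g T := by
      rw [← hsupH]
      exact sup_le ((hg T hT).2) (heq ▸ (hg T' hT').2)
    have : H = g T := Submodule.eq_of_le_of_finrank_le hHK (by omega)
    rw [← this] at hgS
    exact hgS hH
  -- final arithmetic
  have hca : C.card + S.card = AllH.card := Finset.card_sdiff_add_card_eq_card hSsub
  set K := q ^ (n - 1) with hK
  have hqn : q ^ n = q * K := by
    rw [hK, ← pow_succ']
    congr 1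
    omega
  have h7 : (q - 1) * C.card + (q - 1) * S.card = (q - 1) * AllH.card := by
    rw [← Nat.mul_add, hca]
  have h8 : q * K = (q - 1) * K + K := by
    have hq1 : q - 1 + 1 = q := by omega
    calc q * K = (q - 1 + 1) * K := by rw [hq1]
    _ = (q - 1) * K + K := by ring
  have h9 : (q - 1) * TS.card ≤ (q - 1) * C.card := Nat.mul_le_mul_left _ hinj
  have hfin : (q - 1) * S.card ≤ (q - 1) * K := by
    have hAll' : (q - 1) * AllH.card + 1 = q * K := by rw [← hqn]; exact keyAll
    linarith [keyTS, hAll', h7, h8, h9]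
  exact Nat.le_of_mul_le_mul_left hfin (by omega)


theorem lower_bound (q n : ℕ) (F : Type) [Field F] [Fintype F] (hq : Fintype.card F = q)
    (hn : 3 ≤ n) :
    ∃ S : Finset (Submodule F (Fin n → F)),
      (∀ U ∈ S, finrank F U = n - 1) ∧
      (∀ T : Submodule F (Fin n → F), finrank F T = n - 2 →
        (S.filter fun U => T ≤ U).card ≤ q) ∧
      S.card = q ^ (n - 1) := by
  have hq2 : 2 ≤ q := hq ▸ Fintype.one_lt_card
  have hrV : finrank F (Fin n → F) = n := Module.finrank_fin_fun F
  set e₀ : Fin n → F := Pi.single (⟨0, by omega⟩ : Fin n) 1 with he₀def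
  have he₀ : e₀ ≠ 0 := by
    intro h
    have := congrFun h (⟨0, by omega⟩ : Fin n)
    rw [he₀def] at this
    simp [Pi.single_eq_same] at this
  set E : Submodule F (Fin n → F) := Submodule.span F {e₀} with hE
  have hrE : finrank F E = 1 := finrank_span_singleton he₀
  set AllH := Finset.univ.filter fun U : Submodule F (Fin n → F) =>
      finrank F U + 1 = n ∧ (⊥ : Submodule F (Fin n → F)) ≤ U with hAllH
  set B₀ := Finset.univ.filter fun U : Submodule F (Fin n → F) =>
      finrank F U + 1 = n ∧ E ≤ U with hB₀
  have keyAll : (q - 1) * AllH.card + 1 = q ^ n := by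
    have key := card_hyp_through (⊥ : Submodule F (Fin n → F))
    rw [hrV, hq, finrank_bot, Nat.sub_zero] at key
    exact key
  have keyB₀ : (q - 1) * B₀.card + 1 = q ^ (n - 1) := by
    have key := card_hyp_through E
    rw [hrV, hq, hrE] at key
    exact key
  have hsub : B₀ ⊆ AllH := by
    intro U hU
    rw [hB₀, Finset.mem_filter] at hU
    rw [hAllH, Finset.mem_filter]
    exact ⟨Finset.mem_univ _, hU.2.1, bot_le⟩
  refine ⟨AllH \ B₀, ?_, ?_, ?_⟩
  · intro U hU
    rw [Finset.mem_sdiff, hAllH, Finset.mem_filter] at hU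
    have := hU.1.2.1
    omega
  · -- packing condition
    intro T hT
    by_cases he : e₀ ∈ T
    · have hempty : ((AllH \ B₀).filter fun U => T ≤ U) = ∅ := by
        apply Finset.eq_empty_of_forall_notMem
        intro U hU
        rw [Finset.mem_filter, Finset.mem_sdiff] at hU
        obtain ⟨⟨hUAll, hUB⟩, hTU⟩ := hU
        apply hUB
        rw [hB₀, Finset.mem_filter]
        rw [hAllH, Finset.mem_filter] at hUAll
        refine ⟨Finset.mem_univ _, hUAll.2.1, ?_⟩
        rw [hE]
        exact le_trans ((Submodule.span_singleton_le_iff_mem e₀ T).mpr he) hTU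
      rw [hempty]
      simp
    · -- e₀ ∉ T
      have hinf : T ⊓ E = ⊥ := by
        rw [Submodule.eq_bot_iff]
        intro x hx
        rw [Submodule.mem_inf] at hx
        obtain ⟨hxT, hxE⟩ := hx
        rw [hE, Submodule.mem_span_singleton] at hxE
        obtain ⟨c, rfl⟩ := hxE
        by_contra hx0
        have hc : c ≠ 0 := by
          intro h; rw [h, zero_smul] at hx0; exact hx0 rfl
        exact he (by
          have := Submodule.smul_mem T c⁻¹ hxT
          rwa [smul_smul, inv_mul_cancel₀ hc, one_smul] at this)
      have hrTE : finrank F ↥(T ⊔ E) = n - 1 := by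
        have := Submodule.finrank_sup_add_finrank_inf_eq T E
        rw [hinf, finrank_bot, hrE, hT] at this
        omega
      set B₁ := Finset.univ.filter fun U : Submodule F (Fin n → F) =>
          finrank F U + 1 = n ∧ T ≤ U with hB₁
      set B₂ := Finset.univ.filter fun U : Submodule F (Fin n → F) =>
          finrank F U + 1 = n ∧ T ⊔ E ≤ U with hB₂
      have key₁ : (q - 1) * B₁.card + 1 = q ^ 2 := by
        have key := card_hyp_through T
        rw [hrV, hq, hT, show n - (n - 2) = 2 by omega] at key
        exact key
      have key₂ : (q - 1) * B₂.card + 1 = q := by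
        have key := card_hyp_through (T ⊔ E)
        rw [hrV, hq, hrTE, show n - (n - 1) = 1 by omega, pow_one] at key
        exact key
      have hB₁card : B₁.card = q + 1 := by
        have huniq : (q - 1) * (q + 1) + 1 = q ^ 2 := by
          obtain ⟨p, rfl⟩ : ∃ p, q = p + 2 := ⟨q - 2, by omega⟩
          have hp1 : p + 2 - 1 = p + 1 := rfl
          rw [hp1]; ring
        exact Nat.eq_of_mul_eq_mul_left (show 0 < q - 1 by omega)
          (Nat.add_right_cancel (key₁.trans huniq.symm))
      have hB₂card : B₂.card = 1 := by
        have huniq : (q - 1) * 1 + 1 = q := by omega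
        exact Nat.eq_of_mul_eq_mul_left (show 0 < q - 1 by omega)
          (Nat.add_right_cancel (key₂.trans huniq.symm))
      have hsub21 : B₂ ⊆ B₁ := by
        intro U hU
        rw [hB₂, Finset.mem_filter] at hU
        rw [hB₁, Finset.mem_filter]
        exact ⟨Finset.mem_univ _, hU.2.1, le_trans le_sup_left hU.2.2⟩
      have hsubf : ((AllH \ B₀).filter fun U => T ≤ U) ⊆ B₁ \ B₂ := by
        intro U hU
        rw [Finset.mem_filter, Finset.mem_sdiff] at hU
        obtain ⟨⟨hUAll, hUB⟩, hTU⟩ := hU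
        rw [hAllH, Finset.mem_filter] at hUAll
        rw [Finset.mem_sdiff, hB₁, hB₂, Finset.mem_filter, Finset.mem_filter]
        refine ⟨⟨Finset.mem_univ _, hUAll.2.1, hTU⟩, ?_⟩
        rintro ⟨-, -, hTEU⟩
        apply hUB
        rw [hB₀, Finset.mem_filter]
        exact ⟨Finset.mem_univ _, hUAll.2.1, le_trans le_sup_right hTEU⟩
      calc ((AllH \ B₀).filter fun U => T ≤ U).card
          ≤ (B₁ \ B₂).card := Finset.card_le_card hsubf
        _ = B₁.card - B₂.card := Finset.card_sdiff_of_subset hsub21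
        _ ≤ q := by omega
  · -- cardinality
    have hca : (AllH \ B₀).card + B₀.card = AllH.card :=
      Finset.card_sdiff_add_card_eq_card hsub
    set K := q ^ (n - 1) with hK
    have hqn : q ^ n = q * K := by
      rw [hK, ← pow_succ']
      congr 1
      omega
    have h7 : (q - 1) * (AllH \ B₀).card + (q - 1) * B₀.card = (q - 1) * AllH.card := by
      rw [← Nat.mul_add, hca]
    have h8 : q * K = (q - 1) * K + K := by
      have hq1 : q - 1 + 1 = q := by omega
      calc q * K = (q - 1 + 1) * K := by rw [hq1]
      _ = (q - 1) * K + K := by ring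
    have hAll' : (q - 1) * AllH.card + 1 = q * K := by rw [← hqn]; exact keyAll
    have hmul : (q - 1) * (AllH \ B₀).card = (q - 1) * K := by
      linarith [keyB₀, hAll', h7, h8]
    exact Nat.eq_of_mul_eq_mul_left (show 0 < q - 1 by omega) hmul

end MainAux

theorem stmt9 (q n : ℕ) (F : Type) [Field F] [Fintype F] (hq : Fintype.card F = q)
    (hn : 3 ≤ n) :
    packingNumber F n (n - 1) (n - 2) q = q ^ (n - 1) := by
  rw [packingNumber]
  apply le_antisymm
  · apply csSup_le
    · exact ⟨0, ∅, ⟨by simp, by simp⟩, rfl⟩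
    · rintro m ⟨S, ⟨h1, h2⟩, rfl⟩
      exact MainAux.upper_bound q n F hq hn S h1 h2
  · obtain ⟨S, h1, h2, h3⟩ := MainAux.lower_bound q n F hq hn
    refine le_csSup ⟨q ^ (n - 1), ?_⟩ ⟨S, ⟨h1, h2⟩, h3⟩
    rintro m ⟨S', ⟨h1', h2'⟩, rfl⟩
    exact MainAux.upper_bound q n F hq hn S' h1' h2'
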